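/- Assume conditions (1), (2) as before and additionally (3): for every s ∈ (T₁,T₂), ∫ |y|^N · |exp(i^N α s y^N / N!)| · |g(y)| dν(y) < ∞. Then u(t,x) := ∫ e^{ixy} exp(i^N α t y^N / N!) g(y) dν(y) is a classical solution of the Cauchy problem ∂_t u = (α/N!) ∂_x^N u with u(0,x) = f(x): for every t ∈ (T₁,T₂) and x ∈ ℝ the time derivative ∂_t u(t,x) exists, the N-th spatial derivative ∂_x^N u(t,x) (the N-fold iterated derivative of u(t,·) at x) exists, and ∂_t u(t,x) = (α/N!) ∂_x^N u(t,x) = (i^N α / N!) ∫ y^N e^{ixy} exp(i^N α t y^N / N!) g(y) dν(y), with this integral absolutely convergent; moreover u(0,x) = f(x). -/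

import Mathlib

open Complex Real Filter Finset MeasureTheory

open Complex MeasureTheory

noncomputable def Gaux (ν : Measure ℝ) (h : ℝ → ℂ) (k : ℕ) (x : ℝ) : ℂ :=
  ∫ y : ℝ, (Complex.I * y) ^ k * Complex.exp (Complex.I * x * y) * h y ∂ν

lemma norm_Gaux_integrand (h : ℝ → ℂ) (k : ℕ) (x y : ℝ) :
    ‖(Complex.I * y) ^ k * Complex.exp (Complex.I * x * y) * h y‖
      = |y| ^ k * ‖h y‖ := by
  simp [Complex.norm_exp, mul_pow, Complex.norm_real, mul_comm]

lemma Gaux_meas (ν : Measure ℝ) (h : ℝ → ℂ) (hm : AEStronglyMeasurable h ν) (k : ℕ) (x : ℝ) :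
    AEStronglyMeasurable (fun y : ℝ => (Complex.I * y) ^ k * Complex.exp (Complex.I * x * y) * h y) ν := by
  apply AEStronglyMeasurable.mul _ hm
  exact ((Continuous.pow (by continuity) k).mul (by continuity)).aestronglyMeasurable

lemma Gaux_integrable {N : ℕ} (ν : Measure ℝ) (h : ℝ → ℂ) (hm : AEStronglyMeasurable h ν)
    (hint : ∀ n : ℕ, n ≤ N → Integrable (fun y => |y| ^ n * ‖h y‖) ν)
    {k : ℕ} (hk : k ≤ N) (x : ℝ) :
    Integrable (fun y : ℝ => (Complex.I * y) ^ k * Complex.exp (Complex.I * x * y) * h y) ν := by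
  refine (hint k hk).mono' (Gaux_meas ν h hm k x) ?_
  filter_upwards with y
  rw [norm_Gaux_integrand]

lemma expDeriv (y x : ℝ) :
    HasDerivAt (fun x : ℝ => Complex.exp (Complex.I * x * y))
      (Complex.I * y * Complex.exp (Complex.I * x * y)) x := by
  have h0 : HasDerivAt (fun x : ℝ => (Complex.I * y) * (x : ℂ)) (Complex.I * y) x := by
    simpa using (Complex.ofRealCLM.hasDerivAt (x := x)).const_mul (Complex.I * y)
  have h1 : HasDerivAt (fun x : ℝ => Complex.exp ((Complex.I * y) * (x : ℂ)))
      (Complex.exp ((Complex.I * y) * (x : ℂ)) * (Complex.I * y)) x := h0.cexp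
  have : (fun x : ℝ => Complex.exp ((Complex.I * y) * (x : ℂ)))
      = fun x : ℝ => Complex.exp (Complex.I * x * y) := by
    funext x; ring_nf
  rw [this] at h1
  convert h1 using 1
  ring_nf

lemma Gaux_hasDerivAt {N : ℕ} (ν : Measure ℝ) (h : ℝ → ℂ) (hm : AEStronglyMeasurable h ν)
    (hint : ∀ n : ℕ, n ≤ N → Integrable (fun y => |y| ^ n * ‖h y‖) ν)
    {k : ℕ} (hk : k + 1 ≤ N) (x : ℝ) :
    HasDerivAt (Gaux ν h k) (Gaux ν h (k + 1) x) x := by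
  have key := hasDerivAt_integral_of_dominated_loc_of_deriv_le (μ := ν)
    (F := fun (x : ℝ) (y : ℝ) => (Complex.I * y) ^ k * Complex.exp (Complex.I * x * y) * h y)
    (F' := fun (x : ℝ) (y : ℝ) => (Complex.I * y) ^ (k + 1) * Complex.exp (Complex.I * x * y) * h y)
    (x₀ := x) (bound := fun y => |y| ^ (k + 1) * ‖h y‖) (Metric.ball_mem_nhds x one_pos)
    (Filter.Eventually.of_forall fun x' => Gaux_meas ν h hm k x')
    (Gaux_integrable ν h hm hint (le_trans (Nat.le_succ k) hk) x)
    (Gaux_meas ν h hm (k + 1) x)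
    (Filter.Eventually.of_forall fun y x' _ => le_of_eq (norm_Gaux_integrand h (k + 1) x' y))
    (hint (k + 1) hk)
    (Filter.Eventually.of_forall fun y x' _ => by
      have := ((expDeriv y x').const_mul ((Complex.I * y) ^ k)).mul_const (h y)
      convert this using 1
      · rfl
      ring)
  exact key.2

lemma Gaux_continuous {N : ℕ} (ν : Measure ℝ) (h : ℝ → ℂ) (hm : AEStronglyMeasurable h ν)
    (hint : ∀ n : ℕ, n ≤ N → Integrable (fun y => |y| ^ n * ‖h y‖) ν)
    {k : ℕ} (hk : k ≤ N) : Continuous (Gaux ν h k) := by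
  apply continuous_of_dominated (bound := fun y => |y| ^ k * ‖h y‖)
    (fun x' => Gaux_meas ν h hm k x')
    (fun x' => Filter.Eventually.of_forall fun y => le_of_eq (norm_Gaux_integrand h k x' y))
    (hint k hk)
    (Filter.Eventually.of_forall fun y => by continuity)

lemma Gaux_contDiff {N : ℕ} (ν : Measure ℝ) (h : ℝ → ℂ) (hm : AEStronglyMeasurable h ν)
    (hint : ∀ n : ℕ, n ≤ N → Integrable (fun y => |y| ^ n * ‖h y‖) ν) :
    ∀ m k : ℕ, k + m ≤ N → ContDiff ℝ m (Gaux ν h k) := by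
  intro m
  induction m with
  | zero => intro k hk
            exact contDiff_zero.2 (Gaux_continuous ν h hm hint (by omega))
  | succ m ih =>
    intro k hk
    have hd : ∀ x, HasDerivAt (Gaux ν h k) (Gaux ν h (k + 1) x) x :=
      fun x => Gaux_hasDerivAt ν h hm hint (by omega) x
    have : ((m : ℕ∞) : WithTop ℕ∞) + 1 = ((m + 1 : ℕ) : WithTop ℕ∞) := by push_cast; ring
    rw [show ((m + 1 : ℕ) : WithTop ℕ∞) = (m : WithTop ℕ∞) + 1 by push_cast; ring]
    rw [contDiff_succ_iff_deriv]
    refine ⟨fun x => (hd x).differentiableAt, by simp, ?_⟩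
    have hderiv : deriv (Gaux ν h k) = Gaux ν h (k + 1) := funext fun x => (hd x).deriv
    rw [hderiv]
    exact ih (k + 1) (by omega)

lemma Gaux_iteratedDeriv {N : ℕ} (ν : Measure ℝ) (h : ℝ → ℂ) (hm : AEStronglyMeasurable h ν)
    (hint : ∀ n : ℕ, n ≤ N → Integrable (fun y => |y| ^ n * ‖h y‖) ν) :
    ∀ k : ℕ, k ≤ N → iteratedDeriv k (Gaux ν h 0) = Gaux ν h k := by
  intro k
  induction k with
  | zero => intro _; simp [iteratedDeriv_zero]
  | succ k ih =>
    intro hk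
    rw [iteratedDeriv_succ, ih (by omega)]
    funext x
    exact (Gaux_hasDerivAt ν h hm hint hk x).deriv

lemma exp_endpoint_bound {a b s c : ℝ} (ha : a ≤ s) (hb : s ≤ b) :
    Real.exp (c * s) ≤ Real.exp (c * a) + Real.exp (c * b) := by
  rcases le_total 0 c with hc | hc
  · exact (Real.exp_le_exp.2 (mul_le_mul_of_nonneg_left hb hc)).trans
      (le_add_of_nonneg_left (Real.exp_pos _).le)
  · exact (Real.exp_le_exp.2 (mul_le_mul_of_nonpos_left ha hc)).trans
      (le_add_of_nonneg_right (Real.exp_pos _).le)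


/-- The function u(t,x) = ∫ e^{ixy} exp(i^N α t y^N/N!) g(y) dν(y), candidate solution of
∂_t u = (α/N!) ∂_x^N u with initial datum f(x) = ∫ e^{ixy} g(y) dν(y). -/
noncomputable def uSol (N : ℕ) (α : ℂ) (ν : MeasureTheory.Measure ℝ) (g : ℝ → ℂ)
    (t : ℝ) (x : ℝ) : ℂ :=
  ∫ y : ℝ, Complex.exp (Complex.I * x * y) *
    Complex.exp (Complex.I ^ N * α * (t : ℂ) * (y : ℂ) ^ N / (Nat.factorial N : ℂ)) *
    g y ∂ν

set_option maxHeartbeats 1000000 in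
/-- under the assumptions (1), (2) and the additional assumption (3),
u(t,x) = ∫ e^{ixy} exp(i^N α t y^N/N!) g(y) dν(y) is a classical solution of the Cauchy
problem ∂_t u = (α/N!) ∂_x^N u with u(0,x) = f(x): the time derivative exists and equals
(α/N!) times the N-th spatial derivative, both equal to
(i^N α/N!) ∫ y^N e^{ixy} exp(i^N α t y^N/N!) g(y) dν(y), the integral being absolutely
convergent. -/
theorem classical_solution (N : ℕ) (hN : 2 < N) (α : ℂ)
    (ν : Measure ℝ) [IsFiniteMeasure ν] (g : ℝ → ℂ) (hg : Integrable g ν)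
    (h1 : ∀ c : ℝ, 0 < c →
      Integrable (fun y : ℝ => Real.exp (c * |y|) * ‖g y‖) ν)
    (T₁ T₂ : ℝ) (hT₁ : T₁ < 0) (hT₂ : 0 < T₂)
    (h2 : ∀ s ∈ Set.Ioo T₁ T₂,
      Integrable (fun y : ℝ =>
        ‖Complex.exp (Complex.I ^ N * α * (s : ℂ) * (y : ℂ) ^ N /
          (Nat.factorial N : ℂ))‖ * ‖g y‖) ν)
    (h3 : ∀ s ∈ Set.Ioo T₁ T₂,
      Integrable (fun y : ℝ =>
        |y| ^ N * ‖Complex.exp (Complex.I ^ N * α * (s : ℂ) * (y : ℂ) ^ N /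
          (Nat.factorial N : ℂ))‖ * ‖g y‖) ν)
    (t : ℝ) (ht : t ∈ Set.Ioo T₁ T₂) (x : ℝ) :
    Integrable (fun y : ℝ => (y : ℂ) ^ N * Complex.exp (Complex.I * x * y) *
        Complex.exp (Complex.I ^ N * α * (t : ℂ) * (y : ℂ) ^ N / (Nat.factorial N : ℂ)) *
        g y) ν
    ∧ HasDerivAt (fun s : ℝ => uSol N α ν g s x)
        ((α / (Nat.factorial N : ℂ)) *
          (Complex.I ^ N *
            ∫ y : ℝ, (y : ℂ) ^ N * Complex.exp (Complex.I * x * y) *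
              Complex.exp (Complex.I ^ N * α * (t : ℂ) * (y : ℂ) ^ N /
                (Nat.factorial N : ℂ)) * g y ∂ν)) t
    ∧ ContDiff ℝ N (fun x' : ℝ => uSol N α ν g t x')
    ∧ iteratedDeriv N (fun x' : ℝ => uSol N α ν g t x') x
        = Complex.I ^ N *
            ∫ y : ℝ, (y : ℂ) ^ N * Complex.exp (Complex.I * x * y) *
              Complex.exp (Complex.I ^ N * α * (t : ℂ) * (y : ℂ) ^ N /
                (Nat.factorial N : ℂ)) * g y ∂ν
    ∧ uSol N α ν g 0 x = ∫ y : ℝ, Complex.exp (Complex.I * x * y) * g y ∂ν := by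
  have hD : (Nat.factorial N : ℂ) ≠ 0 := by
    exact_mod_cast Nat.cast_ne_zero.2 (Nat.factorial_ne_zero N)
  set D : ℂ := (Nat.factorial N : ℂ) with hDdef
  set h : ℝ → ℂ := fun y => Complex.exp (Complex.I ^ N * α * (t : ℂ) * (y : ℂ) ^ N / D) * g y
    with hh
  have hc1 : Continuous fun y : ℝ => Complex.exp (Complex.I * x * y) :=
    Complex.continuous_exp.comp (continuous_const.mul Complex.continuous_ofReal)
  have hc3 : Continuous fun y : ℝ => (y : ℂ) ^ N := Complex.continuous_ofReal.pow N
  have hc2 : ∀ s : ℝ, Continuous fun y : ℝ =>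
      Complex.exp (Complex.I ^ N * α * (s : ℂ) * (y : ℂ) ^ N / D) := fun s =>
    Complex.continuous_exp.comp ((continuous_const.mul hc3).div_const D)
  have hcont : Continuous fun y : ℝ =>
      Complex.exp (Complex.I ^ N * α * (t : ℂ) * (y : ℂ) ^ N / D) := hc2 t
  have hm : AEStronglyMeasurable h ν := hcont.aestronglyMeasurable.mul hg.1
  -- integrability of |y|^n |h y|
  have hint : ∀ n : ℕ, n ≤ N → Integrable (fun y => |y| ^ n * ‖h y‖) ν := by
    intro n hn
    refine ((h2 t ht).add (h3 t ht)).mono' ?_ ?_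
    · exact ((_root_.continuous_abs.pow n).aestronglyMeasurable.mul hm.norm)
    · filter_upwards with y
      have habs : ‖h y‖
          = ‖Complex.exp (Complex.I ^ N * α * (t : ℂ) * (y : ℂ) ^ N / D)‖
            * ‖g y‖ := by simp [hh]
      have hyp : |y| ^ n ≤ 1 + |y| ^ N := by
        rcases le_total (|y|) 1 with hy | hy
        · exact (pow_le_one₀ (abs_nonneg y) hy).trans
            (le_add_of_nonneg_right (pow_nonneg (abs_nonneg y) N))
        · exact (pow_le_pow_right₀ hy hn).trans (le_add_of_nonneg_left zero_le_one)
      have h0 : (0 : ℝ) ≤ ‖h y‖ := norm_nonneg _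
      calc ‖|y| ^ n * ‖h y‖‖ = |y| ^ n * ‖h y‖ := by
            rw [Real.norm_eq_abs,
              _root_.abs_of_nonneg (mul_nonneg (pow_nonneg (abs_nonneg y) n) h0)]
        _ ≤ (1 + |y| ^ N) * ‖h y‖ := mul_le_mul_of_nonneg_right hyp h0
        _ = _ := by rw [habs]; simp [Pi.add_apply]; ring
  -- first conjunct
  have hI : Integrable (fun y : ℝ => (y : ℂ) ^ N * Complex.exp (Complex.I * x * y) *
      Complex.exp (Complex.I ^ N * α * (t : ℂ) * (y : ℂ) ^ N / D) * g y) ν := by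
    refine (h3 t ht).mono' ?_ ?_
    · exact ((hc3.mul hc1).mul (hc2 t)).aestronglyMeasurable.mul hg.1
    · filter_upwards with y
      simp only [norm_mul, norm_pow, Complex.norm_real, Real.norm_eq_abs]
      have h1' : ‖Complex.exp (Complex.I * x * y)‖ = 1 := by
        simp [Complex.norm_exp]
      rw [h1']
      ring_nf
      exact le_refl _
  -- u(t, ·) as Gaux
  have huG : (fun x' : ℝ => uSol N α ν g t x') = Gaux ν h 0 := by
    funext x'
    unfold uSol Gaux
    simp only [pow_zero, one_mul, hh, ← hDdef, mul_assoc]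
  refine ⟨hI, ?_, ?_, ?_, ?_⟩
  · -- time derivative
    obtain ⟨hT1t, htT2⟩ := ht
    set ε : ℝ := min (t - T₁) (T₂ - t) / 2 with hεdef
    have hε0 : 0 < ε := by
      apply div_pos (lt_min (by linarith) (by linarith)) two_pos
    have ht₁ : t - ε ∈ Set.Ioo T₁ T₂ :=
      ⟨by linarith [min_le_left (t - T₁) (T₂ - t)], by linarith⟩
    have ht₂ : t + ε ∈ Set.Ioo T₁ T₂ :=
      ⟨by linarith, by linarith [min_le_right (t - T₁) (T₂ - t)]⟩
    have hw : ∀ (y s : ℝ), Complex.I ^ N * α * (s : ℂ) * (y : ℂ) ^ N / D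
        = (Complex.I ^ N * α * (y : ℂ) ^ N / D) * (s : ℂ) := fun y s => by ring
    have hab : ∀ (y s : ℝ), ‖Complex.exp (Complex.I ^ N * α * (s : ℂ) *
        (y : ℂ) ^ N / D)‖ = Real.exp ((Complex.I ^ N * α * (y : ℂ) ^ N / D).re * s) := by
      intro y s
      rw [hw y s]
      simp [Complex.norm_exp]
    have key := hasDerivAt_integral_of_dominated_loc_of_deriv_le (μ := ν)
      (F := fun (s : ℝ) (y : ℝ) => Complex.exp (Complex.I * x * y) *
        Complex.exp (Complex.I ^ N * α * (s : ℂ) * (y : ℂ) ^ N / D) * g y)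
      (F' := fun (s : ℝ) (y : ℝ) => Complex.exp (Complex.I * x * y) *
        (Complex.exp (Complex.I ^ N * α * (s : ℂ) * (y : ℂ) ^ N / D) *
          (Complex.I ^ N * α * (y : ℂ) ^ N / D)) * g y)
      (x₀ := t)
      (bound := fun y => ‖Complex.I ^ N * α / D‖ *
        (|y| ^ N * ‖Complex.exp (Complex.I ^ N * α * ((t - ε : ℝ) : ℂ) *
            (y : ℂ) ^ N / D)‖ * ‖g y‖
         + |y| ^ N * ‖Complex.exp (Complex.I ^ N * α * ((t + ε : ℝ) : ℂ) *
            (y : ℂ) ^ N / D)‖ * ‖g y‖))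
      (Metric.ball_mem_nhds t hε0)
      (Filter.Eventually.of_forall fun s => (hc1.mul (hc2 s)).aestronglyMeasurable.mul hg.1)
      ((Gaux_integrable ν h hm hint (Nat.zero_le N) x).congr
        (Filter.Eventually.of_forall fun y => by
          simp only [pow_zero, one_mul, hh, mul_assoc]))
      ((hc1.mul ((hc2 t).mul ((continuous_const.mul hc3).div_const D))).aestronglyMeasurable.mul
        hg.1)
      (Filter.Eventually.of_forall fun y s hs => by
        have hs' : t - ε ≤ s ∧ s ≤ t + ε := by
          rw [Metric.mem_ball, Real.dist_eq, abs_sub_lt_iff] at hs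
          constructor <;> linarith [hs.1, hs.2]
        have hexp : Real.exp ((Complex.I ^ N * α * (y : ℂ) ^ N / D).re * s)
            ≤ Real.exp ((Complex.I ^ N * α * (y : ℂ) ^ N / D).re * (t - ε))
              + Real.exp ((Complex.I ^ N * α * (y : ℂ) ^ N / D).re * (t + ε)) :=
          exp_endpoint_bound hs'.1 hs'.2
        have habsw : ‖Complex.I ^ N * α * (y : ℂ) ^ N / D‖
            = ‖Complex.I ^ N * α / D‖ * |y| ^ N := by
          rw [show Complex.I ^ N * α * (y : ℂ) ^ N / D
            = (Complex.I ^ N * α / D) * (y : ℂ) ^ N from by ring]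
          simp
        have hnorm : ‖Complex.exp (Complex.I * x * y) *
            (Complex.exp (Complex.I ^ N * α * (s : ℂ) * (y : ℂ) ^ N / D) *
              (Complex.I ^ N * α * (y : ℂ) ^ N / D)) * g y‖
            = Real.exp ((Complex.I ^ N * α * (y : ℂ) ^ N / D).re * s) *
              (‖Complex.I ^ N * α / D‖ * |y| ^ N) * ‖g y‖ := by
          simp only [norm_mul]
          rw [hab y s, habsw]
          have h1' : ‖Complex.exp (Complex.I * x * y)‖ = 1 := by
            simp [Complex.norm_exp]
          rw [h1', one_mul]
        beta_reduce
        rw [hnorm, hab y (t - ε), hab y (t + ε)]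
        have hnn : (0:ℝ) ≤ ‖Complex.I ^ N * α / D‖ * |y| ^ N
            * ‖g y‖ := by positivity
        calc Real.exp ((Complex.I ^ N * α * (y : ℂ) ^ N / D).re * s) *
              (‖Complex.I ^ N * α / D‖ * |y| ^ N) * ‖g y‖
            = (‖Complex.I ^ N * α / D‖ * |y| ^ N * ‖g y‖) *
              Real.exp ((Complex.I ^ N * α * (y : ℂ) ^ N / D).re * s) := by ring
          _ ≤ (‖Complex.I ^ N * α / D‖ * |y| ^ N * ‖g y‖) *
              (Real.exp ((Complex.I ^ N * α * (y : ℂ) ^ N / D).re * (t - ε))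
                + Real.exp ((Complex.I ^ N * α * (y : ℂ) ^ N / D).re * (t + ε))) :=
            mul_le_mul_of_nonneg_left hexp hnn
          _ = _ := by ring)
      (((h3 (t - ε) ht₁).add (h3 (t + ε) ht₂)).const_mul _)
      (Filter.Eventually.of_forall fun y s hs => by
        have base : HasDerivAt (fun s : ℝ => (Complex.I ^ N * α * (y : ℂ) ^ N / D) * (s : ℂ))
            (Complex.I ^ N * α * (y : ℂ) ^ N / D) s := by
          simpa using (Complex.ofRealCLM.hasDerivAt (x := s)).const_mul
            (Complex.I ^ N * α * (y : ℂ) ^ N / D)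
        have hd := ((base.cexp).const_mul (Complex.exp (Complex.I * x * y))).mul_const (g y)
        have hfun : (fun s : ℝ => Complex.exp (Complex.I * x * y) *
            Complex.exp (Complex.I ^ N * α * (s : ℂ) * (y : ℂ) ^ N / D) * g y)
            = fun s : ℝ => Complex.exp (Complex.I * x * y) *
              Complex.exp ((Complex.I ^ N * α * (y : ℂ) ^ N / D) * (s : ℂ)) * g y := by
          funext s; rw [hw y s]
        beta_reduce
        rw [hfun, hw y s]
        exact hd)
    have hder := key.2
    have hu : (fun s : ℝ => uSol N α ν g s x)
        = fun s : ℝ => ∫ y : ℝ, Complex.exp (Complex.I * x * y) *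
            Complex.exp (Complex.I ^ N * α * (s : ℂ) * (y : ℂ) ^ N / D) * g y ∂ν := rfl
    rw [hu]
    convert hder using 1
    · rfl
    rw [show (∫ y : ℝ, Complex.exp (Complex.I * x * y) *
        (Complex.exp (Complex.I ^ N * α * (t : ℂ) * (y : ℂ) ^ N / D) *
          (Complex.I ^ N * α * (y : ℂ) ^ N / D)) * g y ∂ν)
      = ∫ y : ℝ, (Complex.I ^ N * α / D) * ((y : ℂ) ^ N * Complex.exp (Complex.I * x * y) *
          Complex.exp (Complex.I ^ N * α * (t : ℂ) * (y : ℂ) ^ N / D) * g y) ∂ν from by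
        congr 1; funext y; ring]
    rw [integral_const_mul]
    ring
  · -- smoothness in x
    rw [huG]
    exact Gaux_contDiff ν h hm hint N 0 (by omega)
  · -- N-th derivative
    rw [huG, Gaux_iteratedDeriv ν h hm hint N le_rfl]
    unfold Gaux
    rw [show (∫ y : ℝ, (Complex.I * y) ^ N * Complex.exp (Complex.I * x * y) * h y ∂ν)
      = ∫ y : ℝ, Complex.I ^ N * ((y : ℂ) ^ N * Complex.exp (Complex.I * x * y) *
          Complex.exp (Complex.I ^ N * α * (t : ℂ) * (y : ℂ) ^ N / D) * g y) ∂ν from by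
        congr 1; funext y; rw [hh]; ring]
    rw [integral_const_mul]
  · -- initial condition
    simp [uSol]
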